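/- For t ∈ (0,1) and a C² function f : ℝ → ℝ with f(t) > 0, f'(t) ≥ 0, f''(t) ≥ 0, f(t) - t f'(t) > 0 and 1 + f(t)² - t² - 2 t f(t) f'(t) > 0, suppose f satisfies the ODE f''/(1+(f')²) = 1/f + 4(f - t f')/(1 - t² - f²) on an interval where 1 - t² - f² > 0. Then the function G(t) = (1 + f² - t² - 2 t f f')·(f - t f') is non-increasing, i.e. G'(t) ≤ 0. -/

import Mathlib

/-- The numerator G(t) = (1 + f² - t² - 2tff')(f - tf') of the pinching quantity
is non-increasing at t under the sign conditions and the minimal-surface ODE. -/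
theorem numerator_nonincreasing (f : ℝ → ℝ) (t : ℝ)
    (hf : ContDiff ℝ 2 f) (ht : t ∈ Set.Ioo (0 : ℝ) 1)
    (hfpos : 0 < f t) (hf' : 0 ≤ deriv f t) (hf'' : 0 ≤ deriv (deriv f) t)
    (hsupp : 0 < f t - t * deriv f t)
    (hnum : 0 < 1 + f t ^ 2 - t ^ 2 - 2 * t * f t * deriv f t)
    (hin : 0 < 1 - t ^ 2 - f t ^ 2)
    (hode : deriv (deriv f) t / (1 + (deriv f t) ^ 2)
      = 1 / f t + 4 * (f t - t * deriv f t) / (1 - t ^ 2 - f t ^ 2)) :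
    deriv (fun s => (1 + f s ^ 2 - s ^ 2 - 2 * s * f s * deriv f s)
      * (f s - s * deriv f s)) t ≤ 0 := by
  have hdf : Differentiable ℝ f := hf.differentiable (by norm_num)
  have hf1 : ContDiff ℝ 1 (deriv f) := by
    have h2 : ContDiff ℝ ((1 : ℕ) + 1) f := by exact_mod_cast hf
    exact_mod_cast (contDiff_succ_iff_deriv.mp h2).2.2
  have hdf' : Differentiable ℝ (deriv f) := hf1.differentiable (by norm_num)
  have h1 : HasDerivAt f (deriv f t) t := (hdf t).hasDerivAt
  have h2 : HasDerivAt (deriv f) (deriv (deriv f) t) t := (hdf' t).hasDerivAt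
  have hid : HasDerivAt (fun s : ℝ => s) 1 t := hasDerivAt_id t
  have hA : HasDerivAt (fun s => 1 + f s ^ 2 - s ^ 2 - 2 * s * f s * deriv f s)
      ((0 + (2 * f t ^ 1 * deriv f t)) - (2 * t ^ 1 * 1)
        - (((0 * t + 2 * 1) * f t + 2 * t * deriv f t) * deriv f t
            + 2 * t * f t * deriv (deriv f) t)) t := by
    exact (((hasDerivAt_const t (1:ℝ)).add (h1.pow 2)).sub (hid.pow 2)).sub
      ((((hasDerivAt_const t (2:ℝ)).mul hid).mul h1).mul h2)
  have hB : HasDerivAt (fun s => f s - s * deriv f s)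
      (deriv f t - (1 * deriv f t + t * deriv (deriv f) t)) t := h1.sub (hid.mul h2)
  have hG := (hA.mul hB).deriv
  erw [hG]
  set a := f t
  set b := deriv f t
  set c := deriv (deriv f) t
  nlinarith [mul_nonneg (mul_nonneg ht.1.le hf'') hnum.le,
    mul_nonneg (mul_nonneg ht.1.le hsupp.le) (mul_nonneg hf' hf'),
    mul_nonneg (mul_nonneg ht.1.le hsupp.le) (mul_nonneg hfpos.le hf''),
    mul_pos ht.1 hsupp]
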